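/- Let A be a 3×3 pairwise comparison matrix and set c = a_13 / (a_12 · a_23). Then λ = 1 + c^{1/3} + c^{−1/3} is an eigenvalue of A (viewed as a complex matrix), and every complex eigenvalue μ of A satisfies |μ| ≤ λ; that is, λ is the Perron (maximal-modulus) eigenvalue of A. -/

import Mathlib

/-- A pairwise comparison matrix: positive entries with `a_ij * a_ji = 1`. -/
def IsPCM {n : ℕ} (A : Matrix (Fin n) (Fin n) ℝ) : Prop :=
  (∀ i j, 0 < A i j) ∧ (∀ i j, A i j * A j i = 1)

private lemma quad_root_abs_le (lam : ℝ) (hlam3 : 3 ≤ lam) (μ : ℂ)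
    (h : μ ^ 2 + ((lam:ℂ) - 3) * μ + (lam:ℂ) * ((lam:ℂ) - 3) = 0) :
    ‖μ‖ ≤ lam := by
  set x := μ.re with hx
  set y := μ.im with hy
  rw [Complex.ext_iff] at h
  obtain ⟨hre, him⟩ := h
  simp [pow_two, Complex.mul_re, Complex.mul_im, ← hx, ← hy] at hre him
  have hsq : x ^ 2 + y ^ 2 ≤ lam ^ 2 := by
    rcases mul_eq_zero.mp (by nlinarith [him] : y * (2 * x + (lam - 3)) = 0) with hy0 | hx0
    · have h1 : (lam - 3) * (lam + 1) ≤ 0 := by nlinarith [sq_nonneg (2*x + (lam-3)), hre]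
      have h2 : lam = 3 := by nlinarith [h1]
      have hx0 : x * x = 0 := by rw [h2, hy0] at hre; linarith
      nlinarith [hx0, hy0, h2]
    · nlinarith [hre]
  have habs : ‖μ‖ = Real.sqrt (x ^ 2 + y ^ 2) := by
    rw [Complex.norm_def, Complex.normSq_apply, ← hx, ← hy]; ring_nf
  rw [habs]
  calc Real.sqrt (x ^ 2 + y ^ 2) ≤ Real.sqrt (lam ^ 2) := Real.sqrt_le_sqrt hsq
    _ = lam := Real.sqrt_sq (by linarith)

/-- For a `3 × 3` pairwise comparison matrix `A`, with `c = a₁₃/(a₁₂·a₂₃)`, the real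
number `λ = 1 + c^(1/3) + c^(-1/3)` is an eigenvalue of `A` (viewed as a complex
matrix), and every complex eigenvalue `μ` of `A` satisfies `|μ| ≤ λ`; that is, `λ` is
the Perron (maximal-modulus) eigenvalue of `A`. -/
theorem perron_eigenvalue_of_3x3_PCM (A : Matrix (Fin 3) (Fin 3) ℝ) (hA : IsPCM A) :
    let c : ℝ := A 0 2 / (A 0 1 * A 1 2)
    let lam : ℝ := 1 + c ^ ((1 : ℝ) / 3) + c ^ (-(1 : ℝ) / 3)
    (lam : ℂ) ∈ spectrum ℂ (A.map (Complex.ofReal)) ∧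
      ∀ μ ∈ spectrum ℂ (A.map (Complex.ofReal)), ‖μ‖ ≤ lam := by
  obtain ⟨hpos, hrec⟩ := hA
  intro c lam
  have ha := hpos 0 1
  have hb := hpos 0 2
  have hd := hpos 1 2
  have hdiag : ∀ i, A i i = 1 := fun i => by
    have h := hrec i i; have := hpos i i; nlinarith
  have h10 : A 1 0 = 1 / A 0 1 := by
    have h := hrec 0 1; field_simp; nlinarith
  have h20 : A 2 0 = 1 / A 0 2 := by
    have h := hrec 0 2; field_simp; nlinarith
  have h21 : A 2 1 = 1 / A 1 2 := by
    have h := hrec 1 2; field_simp; nlinarith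
  have hc : 0 < c := div_pos hb (mul_pos ha hd)
  set t : ℝ := c ^ ((1:ℝ)/3) with ht_def
  have ht : 0 < t := Real.rpow_pos_of_pos hc _
  have ht3 : t ^ 3 = c := by
    rw [ht_def, ← Real.rpow_natCast (c ^ ((1:ℝ)/3)) 3, ← Real.rpow_mul hc.le]
    norm_num
  have hneg : c ^ (-(1:ℝ)/3) = 1 / t := by
    rw [neg_div, Real.rpow_neg hc.le, ht_def]
    exact (one_div _).symm
  have hlam : lam = 1 + t + 1/t := by simp only [lam, hneg, ht_def]
  have htinv : t * (1/t) = 1 := by field_simp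
  have hlam3 : 3 ≤ lam := by
    rw [hlam]
    nlinarith [sq_nonneg (t - 1), htinv, ht]
  have hkey : lam ^ 3 - 3 * lam ^ 2 = c + 1/c - 2 := by
    rw [hlam, ← ht3]
    field_simp
    ring
  have ha0 : (A 0 1 : ℂ) ≠ 0 := by exact_mod_cast ha.ne'
  have hb0 : (A 0 2 : ℂ) ≠ 0 := by exact_mod_cast hb.ne'
  have hd0 : (A 1 2 : ℂ) ≠ 0 := by exact_mod_cast hd.ne'
  have hcC : (c : ℂ) = (A 0 2 : ℂ) / ((A 0 1 : ℂ) * (A 1 2 : ℂ)) := by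
    push_cast [c]; ring
  have hspec : ∀ μ : ℂ, μ ∈ spectrum ℂ (A.map Complex.ofReal) ↔
      μ ^ 3 - 3 * μ ^ 2 - ((c:ℂ) + 1/(c:ℂ) - 2) = 0 := by
    intro μ
    rw [spectrum.mem_iff, Matrix.isUnit_iff_isUnit_det, isUnit_iff_ne_zero, not_not]
    have hdet : ((algebraMap ℂ (Matrix (Fin 3) (Fin 3) ℂ)) μ - A.map Complex.ofReal).det
        = μ ^ 3 - 3 * μ ^ 2 - ((c:ℂ) + 1/(c:ℂ) - 2) := by
      have e0 : A 0 0 = 1 := hdiag 0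
      have e1 : A 1 1 = 1 := hdiag 1
      have e2 : A 2 2 = 1 := hdiag 2
      simp only [Matrix.algebraMap_eq_diagonal]
      rw [Matrix.det_fin_three]
      simp [Matrix.diagonal, Matrix.map_apply, e0, e1, e2, h10, h20, h21, hcC]
      field_simp
      ring
    rw [hdet]
  have hlamroot : ((lam:ℂ)) ^ 3 - 3 * (lam:ℂ) ^ 2 - ((c:ℂ) + 1/(c:ℂ) - 2) = 0 := by
    have h0 : ((lam ^ 3 - 3 * lam ^ 2 - (c + 1/c - 2) : ℝ) : ℂ) = 0 := by
      rw [show lam ^ 3 - 3 * lam ^ 2 - (c + 1/c - 2) = 0 by linarith [hkey]]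
      norm_num
    push_cast at h0
    linear_combination h0
  constructor
  · exact (hspec _).mpr hlamroot
  · intro μ hμ
    have hroot := (hspec μ).mp hμ
    have hfac : (μ - (lam:ℂ)) * (μ ^ 2 + ((lam:ℂ) - 3) * μ + (lam:ℂ) * ((lam:ℂ) - 3)) = 0 := by
      linear_combination hroot - hlamroot
    rcases mul_eq_zero.mp hfac with h | h
    · rw [sub_eq_zero.mp h, Complex.norm_real, Real.norm_eq_abs, abs_of_nonneg (by linarith : (0:ℝ) ≤ lam)]
    · exact quad_root_abs_le lam hlam3 μ h
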